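/- The vector θ* := −(ΦᵀD(γP − I)Φ)⁻¹ΦᵀDR satisfies the projected Bellman equation Φθ* = Π(R + γPΦθ*), where Π := Φ(ΦᵀDΦ)⁻¹ΦᵀD; moreover θ* is the unique θ ∈ ℝⁿ with Φθ = Π(R + γPΦθ). -/

import Mathlib

open Matrix BigOperators

lemma aux_inj {k l : ℕ} (M : Matrix (Fin k) (Fin l) ℝ)
    (h : ∀ v, M.mulVec v = 0 → v = 0) : Function.Injective M.mulVec := by
  have h2 : Function.Injective M.mulVecLin := by
    rw [← LinearMap.ker_eq_bot, LinearMap.ker_eq_bot']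
    exact fun v hv => h v hv
  exact h2

lemma aux_rank_inj {k l : ℕ} (M : Matrix (Fin k) (Fin l) ℝ) (h : M.rank = l) :
    Function.Injective M.mulVec := by
  have h2 : Function.Injective M.mulVecLin := by
    rw [← LinearMap.ker_eq_bot]
    have h3 := LinearMap.finrank_range_add_finrank_ker M.mulVecLin
    rw [Matrix.rank] at h
    rw [h, Module.finrank_fintype_fun_eq_card, Fintype.card_fin] at h3
    have h4 : Module.finrank ℝ (LinearMap.ker M.mulVecLin) = 0 := by omega
    exact Submodule.finrank_eq_zero.mp h4
  exact h2

lemma aux_quad {N : ℕ} (P : Matrix (Fin N) (Fin N) ℝ) (d : Fin N → ℝ) (γ : ℝ) (y : Fin N → ℝ) :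
    y ⬝ᵥ ((Matrix.diagonal d) * (γ • P - 1)).mulVec y
      = γ * (∑ i, ∑ j, d i * P i j * y i * y j) - ∑ i, d i * y i ^ 2 := by
  simp only [dotProduct, Matrix.mulVec, Matrix.diagonal_mul, Matrix.sub_apply,
    Matrix.smul_apply, Matrix.one_apply, smul_eq_mul]
  rw [Finset.mul_sum, ← Finset.sum_sub_distrib]
  refine Finset.sum_congr rfl fun i _ => ?_
  rw [Finset.mul_sum, Finset.mul_sum]
  have : ∀ j ∈ Finset.univ, y i * (d i * (γ * P i j - if i = j then (1:ℝ) else 0) * y j)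
      = γ * (d i * P i j * y i * y j) - (if i = j then d i * y i ^ 2 else 0) := by
    intro j _
    by_cases h : i = j <;> simp [h] <;> ring
  rw [Finset.sum_congr rfl this, Finset.sum_sub_distrib, Finset.sum_ite_eq Finset.univ i
    (fun _ => d i * y i ^ 2)]
  simp

lemma aux_T_le_S {N : ℕ} (P : Matrix (Fin N) (Fin N) ℝ) (d : Fin N → ℝ) (y : Fin N → ℝ)
    (hPnonneg : ∀ i j, 0 ≤ P i j) (hProw : ∀ i, ∑ j, P i j = 1)
    (hdnn : ∀ s, 0 ≤ d s) (hstat : Matrix.vecMul d P = d) :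
    (∑ i, ∑ j, d i * P i j * y i * y j) ≤ ∑ i, d i * y i ^ 2 := by
  have h1 : ∑ i, ∑ j, d i * P i j * y i ^ 2 = ∑ i, d i * y i ^ 2 := by
    refine Finset.sum_congr rfl fun i _ => ?_
    have : ∑ j, d i * P i j * y i ^ 2 = (d i * y i ^ 2) * ∑ j, P i j := by
      rw [Finset.mul_sum]; exact Finset.sum_congr rfl fun j _ => by ring
    rw [this, hProw i, mul_one]
  have h2 : ∑ i, ∑ j, d i * P i j * y j ^ 2 = ∑ i, d i * y i ^ 2 := by
    rw [Finset.sum_comm]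
    refine Finset.sum_congr rfl fun j _ => ?_
    rw [← Finset.sum_mul]
    have hs : ∑ i, d i * P i j = d j := by
      have := congrFun hstat j
      simpa [Matrix.vecMul, dotProduct] using this
    rw [hs]
  have h3 : (∑ i, ∑ j, d i * P i j * y i * y j)
      ≤ ∑ i, ∑ j, d i * P i j * ((y i ^ 2 + y j ^ 2) / 2) := by
    refine Finset.sum_le_sum fun i _ => Finset.sum_le_sum fun j _ => ?_
    have hnn := mul_nonneg (hdnn i) (hPnonneg i j)
    nlinarith [sq_nonneg (y i - y j)]
  calc (∑ i, ∑ j, d i * P i j * y i * y j)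
      ≤ ∑ i, ∑ j, d i * P i j * ((y i ^ 2 + y j ^ 2) / 2) := h3
    _ = (∑ i, ∑ j, d i * P i j * y i ^ 2) / 2 + (∑ i, ∑ j, d i * P i j * y j ^ 2) / 2 := by
        rw [Finset.sum_div, Finset.sum_div, ← Finset.sum_add_distrib]
        refine Finset.sum_congr rfl fun i _ => ?_
        rw [Finset.sum_div, Finset.sum_div, ← Finset.sum_add_distrib]
        exact Finset.sum_congr rfl fun j _ => by ring
    _ = ∑ i, d i * y i ^ 2 := by rw [h1, h2]; ring

/-- The vector `θ* := −(ΦᵀD(γP − I)Φ)⁻¹ΦᵀDR` satisfies the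
projected Bellman equation `Φθ* = Π(R + γPΦθ*)`, where
`Π := Φ(ΦᵀDΦ)⁻¹ΦᵀD`; moreover `θ*` is the unique `θ ∈ ℝⁿ` with
`Φθ = Π(R + γPΦθ)`. -/
theorem theta_star_solves_projected_Bellman_uniquely
    (N n : ℕ) (hN : 0 < N) (hn : 0 < n) (hnN : n ≤ N)
    (P : Matrix (Fin N) (Fin N) ℝ) (d : Fin N → ℝ) (γ : ℝ)
    (Φ : Matrix (Fin N) (Fin n) ℝ) (R : Fin N → ℝ)
    (hPnonneg : ∀ i j, 0 ≤ P i j)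
    (hProw : ∀ i, ∑ j, P i j = 1)
    (hdpos : ∀ s, 0 < d s)
    (hdsum : ∑ s, d s = 1)
    (hstat : Matrix.vecMul d P = d)
    (hγ0 : 0 < γ) (hγ1 : γ < 1)
    (hΦ : Φ.rank = n) :
    let D : Matrix (Fin N) (Fin N) ℝ := Matrix.diagonal d
    let Proj : Matrix (Fin N) (Fin N) ℝ := Φ * (Φᵀ * D * Φ)⁻¹ * Φᵀ * D
    let θstar : Fin n → ℝ :=
      -((Φᵀ * D * (γ • P - 1) * Φ)⁻¹.mulVec ((Φᵀ * D).mulVec R))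
    Φ.mulVec θstar = Proj.mulVec (R + γ • P.mulVec (Φ.mulVec θstar)) ∧
    ∀ θ : Fin n → ℝ,
      Φ.mulVec θ = Proj.mulVec (R + γ • P.mulVec (Φ.mulVec θ)) → θ = θstar := by
  intro D Proj θstar
  have hΦinj : Function.Injective Φ.mulVec := aux_rank_inj Φ hΦ
  have hΦker : ∀ v : Fin n → ℝ, Φ.mulVec v = 0 → v = 0 := by
    intro v hv
    apply hΦinj
    rw [hv, Matrix.mulVec_zero]
  -- S = 0 forces y = 0
  have hSzero : ∀ y : Fin N → ℝ, (∑ i, d i * y i ^ 2) = 0 → y = 0 := by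
    intro y hy
    funext i
    have hnn : ∀ i ∈ Finset.univ, (0:ℝ) ≤ d i * y i ^ 2 :=
      fun i _ => mul_nonneg (hdpos i).le (sq_nonneg _)
    have := (Finset.sum_eq_zero_iff_of_nonneg hnn).mp hy i (Finset.mem_univ i)
    have hd := (hdpos i).ne'
    have : y i ^ 2 = 0 := by
      rcases mul_eq_zero.mp this with h | h
      · exact absurd h hd
      · exact h
    simpa using pow_eq_zero_iff (n := 2) (by norm_num) |>.mp this
  -- Invertibility of A := ΦᵀDΦ
  have hA : IsUnit (Φᵀ * D * Φ) := by
    rw [← Matrix.mulVec_injective_iff_isUnit]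
    apply aux_inj
    intro x hx
    apply hΦker
    apply hSzero (Φ.mulVec x)
    have h0 : x ⬝ᵥ (Φᵀ * D * Φ).mulVec x = 0 := by rw [hx]; simp
    rw [show Φᵀ * D * Φ = Φᵀ * (D * Φ) by rw [Matrix.mul_assoc]] at h0
    rw [← Matrix.mulVec_mulVec, Matrix.dotProduct_mulVec, Matrix.vecMul_transpose,
      ← Matrix.mulVec_mulVec] at h0
    set y := Φ.mulVec x with hy
    rw [show y ⬝ᵥ D.mulVec y = ∑ i, d i * y i ^ 2 by
      simp only [dotProduct, D, Matrix.mulVec_diagonal]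
      exact Finset.sum_congr rfl fun i _ => by ring] at h0
    exact h0
  have hAdet : IsUnit (Φᵀ * D * Φ).det := (Matrix.isUnit_iff_isUnit_det _).mp hA
  -- Invertibility of B := ΦᵀD(γP-1)Φ
  have hBinj : Function.Injective (Φᵀ * D * (γ • P - 1) * Φ).mulVec := by
    apply aux_inj
    intro x hx
    apply hΦker
    apply hSzero (Φ.mulVec x)
    have h0 : x ⬝ᵥ (Φᵀ * D * (γ • P - 1) * Φ).mulVec x = 0 := by rw [hx]; simp
    rw [show Φᵀ * D * (γ • P - 1) * Φ = Φᵀ * (D * (γ • P - 1) * Φ) by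
      simp only [Matrix.mul_assoc]] at h0
    rw [← Matrix.mulVec_mulVec, Matrix.dotProduct_mulVec, Matrix.vecMul_transpose,
      ← Matrix.mulVec_mulVec, show D = Matrix.diagonal d from rfl,
      aux_quad P d γ (Φ.mulVec x)] at h0
    have hT := aux_T_le_S P d (Φ.mulVec x) hPnonneg hProw (fun s => (hdpos s).le) hstat
    have hSnn : (0:ℝ) ≤ ∑ i, d i * (Φ.mulVec x) i ^ 2 :=
      Finset.sum_nonneg fun i _ => mul_nonneg (hdpos i).le (sq_nonneg _)
    nlinarith
  have hB : IsUnit (Φᵀ * D * (γ • P - 1) * Φ) :=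
    Matrix.mulVec_injective_iff_isUnit.mp hBinj
  have hBdet : IsUnit (Φᵀ * D * (γ • P - 1) * Φ).det := (Matrix.isUnit_iff_isUnit_det _).mp hB
  -- decomposition of B
  have hBdecomp : Φᵀ * D * (γ • P - 1) * Φ = γ • (Φᵀ * D * P * Φ) - Φᵀ * D * Φ := by
    rw [Matrix.mul_sub, Matrix.sub_mul, Matrix.mul_smul, Matrix.smul_mul, Matrix.mul_one]
  -- key equivalence
  have hiff : ∀ θ : Fin n → ℝ,
      Φ.mulVec θ = Proj.mulVec (R + γ • P.mulVec (Φ.mulVec θ)) ↔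
      (Φᵀ * D * (γ • P - 1) * Φ).mulVec θ = -((Φᵀ * D).mulVec R) := by
    intro θ
    have hRHS : (Φᵀ * D).mulVec (R + γ • P.mulVec (Φ.mulVec θ))
        = (Φᵀ * D).mulVec R + γ • (Φᵀ * D * P * Φ).mulVec θ := by
      rw [Matrix.mulVec_add, Matrix.mulVec_smul, Matrix.mulVec_mulVec, Matrix.mulVec_mulVec]
    constructor
    · intro h
      have h2 := congrArg (Φᵀ * D).mulVec h
      rw [Matrix.mulVec_mulVec, Matrix.mulVec_mulVec] at h2
      have hproj : Φᵀ * D * Proj = Φᵀ * D := by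
        show Φᵀ * D * (Φ * (Φᵀ * D * Φ)⁻¹ * Φᵀ * D) = Φᵀ * D
        rw [show Φᵀ * D * (Φ * (Φᵀ * D * Φ)⁻¹ * Φᵀ * D)
            = (Φᵀ * D * Φ) * (Φᵀ * D * Φ)⁻¹ * (Φᵀ * D) by simp only [Matrix.mul_assoc],
          Matrix.mul_nonsing_inv _ hAdet, Matrix.one_mul]
      rw [hproj, hRHS] at h2
      rw [hBdecomp, Matrix.sub_mulVec, h2, Matrix.smul_mulVec]
      abel
    · intro h
      rw [hBdecomp, Matrix.sub_mulVec, Matrix.smul_mulVec] at h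
      have hA2 : (Φᵀ * D * Φ).mulVec θ = (Φᵀ * D).mulVec R + γ • (Φᵀ * D * P * Φ).mulVec θ := by
        have h3 : (Φᵀ * D * Φ).mulVec θ = γ • (Φᵀ * D * P * Φ).mulVec θ
            - (γ • (Φᵀ * D * P * Φ).mulVec θ - (Φᵀ * D * Φ).mulVec θ) := by abel
        rw [h3, h]
        abel
      have hΦeq : Φ = Φ * (Φᵀ * D * Φ)⁻¹ * (Φᵀ * D * Φ) := by
        rw [Matrix.mul_assoc, Matrix.nonsing_inv_mul _ hAdet, Matrix.mul_one]
      calc Φ.mulVec θ = (Φ * (Φᵀ * D * Φ)⁻¹ * (Φᵀ * D * Φ)).mulVec θ := by rw [← hΦeq]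
        _ = (Φ * (Φᵀ * D * Φ)⁻¹).mulVec ((Φᵀ * D * Φ).mulVec θ) := by
            rw [Matrix.mulVec_mulVec]
        _ = (Φ * (Φᵀ * D * Φ)⁻¹).mulVec ((Φᵀ * D).mulVec (R + γ • P.mulVec (Φ.mulVec θ))) := by
            rw [hA2, hRHS]
        _ = Proj.mulVec (R + γ • P.mulVec (Φ.mulVec θ)) := by
            show _ = (Φ * (Φᵀ * D * Φ)⁻¹ * Φᵀ * D).mulVec _
            rw [Matrix.mulVec_mulVec]
            congr 1
            simp only [Matrix.mul_assoc]
  -- θstar satisfies the B-equation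
  have hθstar : (Φᵀ * D * (γ • P - 1) * Φ).mulVec θstar = -((Φᵀ * D).mulVec R) := by
    show (Φᵀ * D * (γ • P - 1) * Φ).mulVec
      (-((Φᵀ * D * (γ • P - 1) * Φ)⁻¹.mulVec ((Φᵀ * D).mulVec R))) = _
    rw [Matrix.mulVec_neg, Matrix.mulVec_mulVec, Matrix.mul_nonsing_inv _ hBdet,
      Matrix.one_mulVec]
  refine ⟨(hiff θstar).mpr hθstar, fun θ hθ => ?_⟩
  exact hBinj (((hiff θ).mp hθ).trans hθstar.symm)
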